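/- If C(x,y) is the generating function of connected crossing-free chord diagrams and D0(x,y) that of all crossing-free chord diagrams (x marking vertices, y marking chords), then D0(x,y) = 1 + C(x·D0(x,y), y). -/

import Mathlib

/-- Two chords `(p.1, p.2)` and `(q.1, q.2)` of a circle with vertices labeled
`0, 1, …, n-1` in circular order interleave, i.e. cross, when
`p.1 < q.1 < p.2 < q.2`. -/
def Interleaves {n : ℕ} (p q : Fin n × Fin n) : Prop :=
  p.1 < q.1 ∧ q.1 < p.2 ∧ p.2 < q.2

instance {n : ℕ} (p q : Fin n × Fin n) : Decidable (Interleaves p q) :=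
  inferInstanceAs (Decidable (_ ∧ _ ∧ _))

/-- The number of crossings of a set of chords (each chord recorded with its
endpoints in increasing order): the number of unordered pairs of chords whose
endpoints interleave around the circle. -/
def crossNum {n : ℕ} (D : Finset (Fin n × Fin n)) : ℕ :=
  ((D ×ˢ D).filter fun pq => Interleaves pq.1 pq.2).card

open MvPowerSeries

/-- A chord diagram on the `n` labeled points `0, …, n−1` of a circle is a set
of chords, each recorded with its endpoints in increasing order; isolated
vertices are allowed, chords may share endpoints, but there are no repeated
chords. `IsDiagram D` states that the chords are correctly normalized. -/
def IsDiagram {n : ℕ} (D : Finset (Fin n × Fin n)) : Prop :=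
  ∀ p ∈ D, p.1 < p.2

/-- The generating function `D₀(x,y)` of crossing-free chord diagrams on a
circle, where `x` (variable `0`) marks vertices and `y` (variable `1`) marks
chords. -/
noncomputable def diagGF0 : MvPowerSeries (Fin 2) ℚ :=
  fun e => (Nat.card {D : Finset (Fin (e 0) × Fin (e 0)) //
    IsDiagram D ∧ crossNum D = 0 ∧ D.card = e 1} : ℚ)

/-- The graph on the `n` points of the circle whose edges are the chords of the
diagram `D`. -/
def diagGraph {n : ℕ} (D : Finset (Fin n × Fin n)) : SimpleGraph (Fin n) :=
  SimpleGraph.fromRel (fun a b => (a, b) ∈ D)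

/-- The generating function `C(x,y)` of connected crossing-free chord diagrams
(connected as graphs; a single isolated vertex is connected), where `x`
(variable `0`) marks vertices and `y` (variable `1`) marks chords. -/
noncomputable def connDiagGF0 : MvPowerSeries (Fin 2) ℚ :=
  fun e => (Nat.card {D : Finset (Fin (e 0) × Fin (e 0)) //
    IsDiagram D ∧ crossNum D = 0 ∧ D.card = e 1 ∧ (diagGraph D).Connected} : ℚ)

namespace CDaux

open Finset

variable {a b n : ℕ}

/-- counting function for crossing-free diagrams -/
noncomputable def dn (n m : ℕ) : ℕ :=
  Nat.card {D : Finset (Fin n × Fin n) // IsDiagram D ∧ crossNum D = 0 ∧ D.card = m}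

/-- counting function for connected crossing-free diagrams -/
noncomputable def cn (n m : ℕ) : ℕ :=
  Nat.card {D : Finset (Fin n × Fin n) //
    IsDiagram D ∧ crossNum D = 0 ∧ D.card = m ∧ (diagGraph D).Connected}

lemma crossNum_eq_zero_iff {D : Finset (Fin n × Fin n)} :
    crossNum D = 0 ↔ ∀ p ∈ D, ∀ q ∈ D, ¬ Interleaves p q := by
  rw [crossNum, Finset.card_eq_zero, Finset.filter_eq_empty_iff]
  constructor
  · intro h p hp q hq
    exact h (show (p, q) ∈ D ×ˢ D from Finset.mem_product.2 ⟨hp, hq⟩)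
  · rintro h ⟨p, q⟩ hpq
    exact h p (Finset.mem_product.1 hpq).1 q (Finset.mem_product.1 hpq).2

lemma crossNum_zero_of_subset {D D' : Finset (Fin n × Fin n)} (hsub : D ⊆ D')
    (h : crossNum D' = 0) : crossNum D = 0 := by
  rw [crossNum_eq_zero_iff] at h ⊢
  exact fun p hp q hq => h p (hsub hp) q (hsub hq)

/-- relabeling of chords along a vertex map -/
def mapChords (f : Fin a → Fin b) (E : Finset (Fin a × Fin a)) : Finset (Fin b × Fin b) :=
  E.image fun p => (f p.1, f p.2)

lemma prodmap_inj {f : Fin a → Fin b} (hf : Function.Injective f) :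
    Function.Injective (fun p : Fin a × Fin a => (f p.1, f p.2)) := by
  rintro ⟨x, y⟩ ⟨z, w⟩ h
  simp only [Prod.mk.injEq] at h
  exact Prod.ext (hf h.1) (hf h.2)

lemma mem_mapChords {f : Fin a → Fin b} (hf : Function.Injective f)
    {E : Finset (Fin a × Fin a)} {x y : Fin a} :
    (f x, f y) ∈ mapChords f E ↔ (x, y) ∈ E := by
  constructor
  · intro h
    obtain ⟨⟨z, w⟩, hzw, heq⟩ := Finset.mem_image.1 h
    simp only [Prod.mk.injEq] at heq
    obtain ⟨h1, h2⟩ := heq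
    rwa [hf h1, hf h2] at hzw
  · intro h; exact Finset.mem_image.2 ⟨(x, y), h, rfl⟩

lemma mem_mapChords_elim {f : Fin a → Fin b} {E : Finset (Fin a × Fin a)}
    {p : Fin b × Fin b} (h : p ∈ mapChords f E) :
    ∃ x y, (x, y) ∈ E ∧ p = (f x, f y) := by
  obtain ⟨⟨x, y⟩, hxy, heq⟩ := Finset.mem_image.1 h
  exact ⟨x, y, hxy, heq.symm⟩

lemma card_mapChords {f : Fin a → Fin b} (hf : Function.Injective f)
    (E : Finset (Fin a × Fin a)) : (mapChords f E).card = E.card :=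
  Finset.card_image_of_injective _ (prodmap_inj hf)

lemma mapChords_injective {f : Fin a → Fin b} (hf : Function.Injective f) :
    Function.Injective (mapChords f : Finset (Fin a × Fin a) → Finset (Fin b × Fin b)) := by
  intro E E' h
  ext ⟨x, y⟩
  rw [← mem_mapChords hf (E := E), ← mem_mapChords hf (E := E'), h]

lemma interleaves_map {f : Fin a → Fin b} (hf : StrictMono f) {p q : Fin a × Fin a} :
    Interleaves (f p.1, f p.2) (f q.1, f q.2) ↔ Interleaves p q := by
  simp only [Interleaves, hf.lt_iff_lt]

lemma isDiagram_mapChords {f : Fin a → Fin b} (hf : StrictMono f)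
    {E : Finset (Fin a × Fin a)} : IsDiagram (mapChords f E) ↔ IsDiagram E := by
  constructor
  · intro h p hp
    have := h _ (Finset.mem_image.2 ⟨p, hp, rfl⟩)
    exact hf.lt_iff_lt.1 this
  · intro h p hp
    obtain ⟨x, y, hxy, rfl⟩ := mem_mapChords_elim hp
    exact hf (h _ hxy)

lemma crossNum_mapChords_zero {f : Fin a → Fin b} (hf : StrictMono f)
    {E : Finset (Fin a × Fin a)} : crossNum (mapChords f E) = 0 ↔ crossNum E = 0 := by
  rw [crossNum_eq_zero_iff, crossNum_eq_zero_iff]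
  constructor
  · intro h p hp q hq hint
    exact h _ (Finset.mem_image.2 ⟨p, hp, rfl⟩) _ (Finset.mem_image.2 ⟨q, hq, rfl⟩)
      ((interleaves_map hf).2 hint)
  · intro h p hp q hq hint
    obtain ⟨x, y, hxy, rfl⟩ := mem_mapChords_elim hp
    obtain ⟨z, w, hzw, rfl⟩ := mem_mapChords_elim hq
    exact h _ hxy _ hzw ((interleaves_map hf (p := (x,y)) (q := (z,w))).1 hint)

lemma diagGraph_adj {D : Finset (Fin n × Fin n)} {u w : Fin n} :
    (diagGraph D).Adj u w ↔ u ≠ w ∧ ((u, w) ∈ D ∨ (w, u) ∈ D) := by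
  simp [diagGraph, SimpleGraph.fromRel_adj]

lemma reach_closed {V : Type*} {G : SimpleGraph V} {P : V → Prop}
    (hP : ∀ u w, G.Adj u w → P u → P w) {x y : V} (h : G.Reachable x y) (hx : P x) : P y := by
  obtain ⟨w⟩ := h
  induction w with
  | nil => exact hx
  | cons h p ih => exact ih (hP _ _ h hx)

lemma reach_boundary {V : Type*} {G : SimpleGraph V} {P : V → Prop} {x y : V}
    (h : G.Reachable x y) (hx : ¬ P x) (hy : P y) :
    ∃ u w, G.Adj u w ∧ ¬ P u ∧ P w := by
  obtain ⟨w⟩ := h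
  induction w with
  | nil => exact absurd hy hx
  | @cons u v _ h p ih =>
      by_cases hv : P v
      · exact ⟨u, v, h, hx, hv⟩
      · exact ih hv hy

lemma reach_mapChords {f : Fin a → Fin b} (hf : StrictMono f)
    {E : Finset (Fin a × Fin a)} {x y : Fin a} (h : (diagGraph E).Reachable x y) :
    (diagGraph (mapChords f E)).Reachable (f x) (f y) := by
  obtain ⟨w⟩ := h
  induction w with
  | nil => exact SimpleGraph.Reachable.refl _
  | @cons u v _ h p ih =>
      refine SimpleGraph.Reachable.trans (SimpleGraph.Adj.reachable ?_) ih
      rw [diagGraph_adj] at h ⊢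
      refine ⟨fun hc => h.1 (hf.injective hc), ?_⟩
      rcases h.2 with h2 | h2
      · exact Or.inl ((mem_mapChords hf.injective).2 h2)
      · exact Or.inr ((mem_mapChords hf.injective).2 h2)

lemma reach_mapChords_rev {f : Fin a → Fin b} (hf : StrictMono f)
    {E : Finset (Fin a × Fin a)} {u y : Fin b}
    (h : (diagGraph (mapChords f E)).Reachable u y) :
    ∀ x, u = f x → ∃ z, y = f z ∧ (diagGraph E).Reachable x z := by
  obtain ⟨w⟩ := h
  induction w with
  | nil => exact fun x hx => ⟨x, hx, SimpleGraph.Reachable.refl _⟩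
  | @cons u v _ h p ih =>
      rintro x rfl
      rw [diagGraph_adj] at h
      have hv : ∃ x', v = f x' ∧ (diagGraph E).Adj x x' := by
        rcases h.2 with h2 | h2
        · obtain ⟨z, w', hzw, heq⟩ := mem_mapChords_elim h2
          simp only [Prod.mk.injEq] at heq
          obtain ⟨h1, h2'⟩ := heq
          refine ⟨w', h2', ?_⟩
          rw [diagGraph_adj]
          refine ⟨fun hc => h.1 (by rw [hc, ← h2']), Or.inl ?_⟩
          rwa [← hf.injective h1] at hzw
        · obtain ⟨z, w', hzw, heq⟩ := mem_mapChords_elim h2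
          simp only [Prod.mk.injEq] at heq
          obtain ⟨h1, h2'⟩ := heq
          refine ⟨z, h1, ?_⟩
          rw [diagGraph_adj]
          refine ⟨fun hc => h.1 (by rw [hc, ← h1]), Or.inr ?_⟩
          rwa [← hf.injective h2'] at hzw
      obtain ⟨x', rfl, hadj⟩ := hv
      obtain ⟨z, rfl, hr⟩ := ih x' rfl
      exact ⟨z, rfl, hadj.reachable.trans hr⟩

end CDaux
namespace CDaux

open Finset

variable {a b n : ℕ}

/-- pullback of chords along a vertex map -/
def pullChords (f : Fin a → Fin b) (E : Finset (Fin b × Fin b)) : Finset (Fin a × Fin a) :=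
  (Finset.univ : Finset (Fin a × Fin a)).filter (fun p => (f p.1, f p.2) ∈ E)

lemma mem_pullChords {f : Fin a → Fin b} {E : Finset (Fin b × Fin b)} {x y : Fin a} :
    (x, y) ∈ pullChords f E ↔ (f x, f y) ∈ E := by
  simp [pullChords]

lemma pullChords_mapChords {f : Fin a → Fin b} (hf : Function.Injective f)
    (E : Finset (Fin a × Fin a)) : pullChords f (mapChords f E) = E := by
  ext ⟨x, y⟩
  rw [mem_pullChords, mem_mapChords hf]

lemma mapChords_pullChords {f : Fin a → Fin b} {E : Finset (Fin b × Fin b)}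
    (h : ∀ p ∈ E, p.1 ∈ Set.range f ∧ p.2 ∈ Set.range f) :
    mapChords f (pullChords f E) = E := by
  ext ⟨u, w⟩
  constructor
  · intro hm
    obtain ⟨x, y, hxy, heq⟩ := mem_mapChords_elim hm
    rw [heq]
    exact mem_pullChords.1 hxy
  · intro hm
    obtain ⟨⟨x, rfl⟩, ⟨y, rfl⟩⟩ := h _ hm
    exact Finset.mem_image.2 ⟨(x, y), mem_pullChords.2 hm, rfl⟩

/-- all chords of `D` have both endpoints in `S` -/
def chordsWithin (S : Finset (Fin n)) (D : Finset (Fin n × Fin n)) : Prop :=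
  ∀ p ∈ D, p.1 ∈ S ∧ p.2 ∈ S

/-- all chords of `D` avoid `S` and no element of `S` lies strictly under a chord -/
def gapOk (S : Finset (Fin n)) (D : Finset (Fin n × Fin n)) : Prop :=
  ∀ p ∈ D, p.1 ∉ S ∧ p.2 ∉ S ∧ ∀ s ∈ S, ¬(p.1 < s ∧ s < p.2)

/-- all points of `S` are mutually reachable in the graph of `C` -/
def connOn (S : Finset (Fin n)) (C : Finset (Fin n × Fin n)) : Prop :=
  ∀ x ∈ S, ∀ y ∈ S, (diagGraph C).Reachable x y

lemma diagGraph_mono {D D' : Finset (Fin n × Fin n)} (h : D ⊆ D') :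
    diagGraph D ≤ diagGraph D' := by
  intro u w hadj
  rw [diagGraph_adj] at hadj ⊢
  exact ⟨hadj.1, hadj.2.imp (@h _) (@h _)⟩

lemma reach_boundary' {V : Type*} {G : SimpleGraph V} {P : V → Prop} {x y : V}
    (h : G.Reachable x y) (hx : ¬ P x) (hy : P y) :
    ∃ u w, G.Adj u w ∧ ¬ P u ∧ P w ∧ G.Reachable x u := by
  obtain ⟨w⟩ := h
  induction w with
  | nil => exact absurd hy hx
  | @cons u v _ h p ih =>
      by_cases hv : P v
      · exact ⟨u, v, h, hx, hv, SimpleGraph.Reachable.refl _⟩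
      · obtain ⟨u', w', h1, h2, h3, h4⟩ := ih hv hy
        exact ⟨u', w', h1, h2, h3, h.reachable.trans h4⟩

section Decomp

variable (hn : 0 < n) (D : Finset (Fin n × Fin n))

/-- the set of vertices of the connected component of the vertex `0` -/
noncomputable def compS : Finset (Fin n) :=
  @Finset.filter _ (fun x => (diagGraph D).Reachable ⟨0, hn⟩ x)
    (Classical.decPred _) Finset.univ

noncomputable def coreOf : Finset (Fin n × Fin n) :=
  D.filter (fun p => p.1 ∈ compS hn D)

noncomputable def gapsOf : Finset (Fin n × Fin n) :=
  D.filter (fun p => p.1 ∉ compS hn D)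

variable {hn D}

lemma mem_compS {x : Fin n} : x ∈ compS hn D ↔ (diagGraph D).Reachable ⟨0, hn⟩ x := by
  simp [compS]

lemma zero_mem_compS : (⟨0, hn⟩ : Fin n) ∈ compS hn D :=
  mem_compS.2 (SimpleGraph.Reachable.refl _)

lemma adj_of_mem {p : Fin n × Fin n} (hD : IsDiagram D) (hp : p ∈ D) :
    (diagGraph D).Adj p.1 p.2 := by
  rw [diagGraph_adj]
  exact ⟨Fin.ne_of_lt (hD p hp), Or.inl hp⟩

lemma compS_closed {p : Fin n × Fin n} (hD : IsDiagram D) (hp : p ∈ D) :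
    (p.1 ∈ compS hn D ↔ p.2 ∈ compS hn D) := by
  have hadj := adj_of_mem hD hp
  rw [mem_compS, mem_compS]
  exact ⟨fun h => h.trans hadj.reachable, fun h => h.trans hadj.symm.reachable⟩

lemma chordsWithin_coreOf (hD : IsDiagram D) : chordsWithin (compS hn D) (coreOf hn D) := by
  intro p hp
  rw [coreOf, Finset.mem_filter] at hp
  exact ⟨hp.2, (compS_closed hD hp.1).1 hp.2⟩

lemma gapOk_gapsOf (hD : IsDiagram D) (hX : crossNum D = 0) :
    gapOk (compS hn D) (gapsOf hn D) := by
  intro p hp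
  rw [gapsOf, Finset.mem_filter] at hp
  refine ⟨hp.2, fun h2 => hp.2 ((compS_closed hD hp.1).2 h2), ?_⟩
  rintro s hs ⟨hs1, hs2⟩
  -- boundary-crossing argument
  have hz : ¬ (p.1 < (⟨0, hn⟩ : Fin n) ∧ (⟨0, hn⟩ : Fin n) < p.2) := by
    rintro ⟨hc, -⟩
    exact absurd hc (by simp [Fin.lt_def])
  obtain ⟨u, w, hadj, hPu, hPw, hreach⟩ :=
    reach_boundary' (P := fun z => p.1 < z ∧ z < p.2) (mem_compS.1 hs) hz ⟨hs1, hs2⟩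
  have huS : u ∈ compS hn D := mem_compS.2 hreach
  have hu1 : u ≠ p.1 := fun h => hp.2 (h ▸ huS)
  have hu2 : u ≠ p.2 := fun h => (fun h2 => hp.2 ((compS_closed hD hp.1).2 h2)) (h ▸ huS)
  rw [diagGraph_adj] at hadj
  rw [crossNum_eq_zero_iff] at hX
  rcases lt_or_ge u p.1 with hult | hge
  · -- u < p.1 < w < p.2 : chord (u,w) interleaves p
    have huw' : u < w := lt_trans hult hPw.1
    have hmem : (u, w) ∈ D := by
      rcases hadj.2 with h | h
      · exact h
      · exact absurd (hD _ h) (not_lt.2 (le_of_lt huw'))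
    exact hX _ hmem _ hp.1 ⟨hult, hPw.1, hPw.2⟩
  · have hugt : p.2 < u := by
      rcases lt_or_ge p.2 u with h | h
      · exact h
      · exfalso
        rcases lt_or_eq_of_le h with h' | h'
        · exact hPu ⟨lt_of_le_of_ne hge (Ne.symm hu1), h'⟩
        · exact hu2 h'
    have hwu : w < u := lt_trans hPw.2 hugt
    have hmem : (w, u) ∈ D := by
      rcases hadj.2 with h | h
      · exact absurd (hD _ h) (not_lt.2 (le_of_lt hwu))
      · exact h
    exact hX _ hp.1 _ hmem ⟨hPw.1, hPw.2, hugt⟩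

lemma connOn_coreOf (hD : IsDiagram D) : connOn (compS hn D) (coreOf hn D) := by
  have key : ∀ x ∈ compS hn D, (diagGraph (coreOf hn D)).Reachable ⟨0, hn⟩ x := by
    intro x hx
    have inv : ∀ u w, (diagGraph D).Adj u w →
        ((u ∈ compS hn D ∧ (diagGraph (coreOf hn D)).Reachable ⟨0, hn⟩ u) ∨ u ∉ compS hn D) →
        ((w ∈ compS hn D ∧ (diagGraph (coreOf hn D)).Reachable ⟨0, hn⟩ w) ∨ w ∉ compS hn D) := by
      intro u w hadj hu
      rcases hu with ⟨huS, hur⟩ | huS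
      · have hwS : w ∈ compS hn D := mem_compS.2 ((mem_compS.1 huS).trans hadj.reachable)
        left
        refine ⟨hwS, hur.trans (SimpleGraph.Adj.reachable ?_)⟩
        rw [diagGraph_adj] at hadj ⊢
        refine ⟨hadj.1, ?_⟩
        rcases hadj.2 with h | h
        · exact Or.inl (Finset.mem_filter.2 ⟨h, huS⟩)
        · exact Or.inr (Finset.mem_filter.2 ⟨h, hwS⟩)
      · by_cases hwS : w ∈ compS hn D
        · exact absurd (mem_compS.2 ((mem_compS.1 hwS).trans hadj.symm.reachable)) huS
        · exact Or.inr hwS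
    have base : ((⟨0, hn⟩ : Fin n) ∈ compS hn D ∧
        (diagGraph (coreOf hn D)).Reachable ⟨0, hn⟩ ⟨0, hn⟩) ∨
        (⟨0, hn⟩ : Fin n) ∉ compS hn D :=
      Or.inl ⟨zero_mem_compS, SimpleGraph.Reachable.refl _⟩
    have := reach_closed inv (mem_compS.1 hx) base
    rcases this with ⟨-, h⟩ | h
    · exact h
    · exact absurd hx h
  intro x hx y hy
  exact (key x hx).symm.trans (key y hy)

lemma core_union_gaps : coreOf hn D ∪ gapsOf hn D = D := by
  rw [coreOf, gapsOf]
  exact Finset.filter_union_filter_not_eq _ D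

end Decomp

section Recomp

variable {S : Finset (Fin n)} {C G : Finset (Fin n × Fin n)}

lemma recomp_crossNum (hWC : chordsWithin S C) (hGok : gapOk S G)
    (hXC : crossNum C = 0) (hXG : crossNum G = 0) : crossNum (C ∪ G) = 0 := by
  rw [crossNum_eq_zero_iff] at hXC hXG ⊢
  have cross : ∀ p ∈ C, ∀ q ∈ G, ¬ Interleaves p q ∧ ¬ Interleaves q p := by
    intro p hp q hq
    obtain ⟨h1, h2, h3⟩ := hGok q hq
    constructor
    · rintro ⟨ha, hb, hc⟩
      exact h3 p.2 (hWC p hp).2 ⟨hb, hc⟩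
    · rintro ⟨ha, hb, hc⟩
      exact h3 p.1 (hWC p hp).1 ⟨ha, hb⟩
  intro p hp q hq
  rcases Finset.mem_union.1 hp with hp' | hp' <;> rcases Finset.mem_union.1 hq with hq' | hq'
  · exact hXC p hp' q hq'
  · exact (cross p hp' q hq').1
  · exact (cross q hq' p hp').2
  · exact hXG p hp' q hq'

variable (hn : 0 < n)

lemma recomp_compS (h0 : (⟨0, hn⟩ : Fin n) ∈ S) (hWC : chordsWithin S C)
    (hGok : gapOk S G) (hconn : connOn S C) : compS hn (C ∪ G) = S := by
  ext x
  rw [mem_compS]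
  constructor
  · intro hr
    refine reach_closed (P := fun z => z ∈ S) ?_ hr h0
    intro u w hadj hu
    rw [diagGraph_adj] at hadj
    rcases hadj.2 with h | h <;> rcases Finset.mem_union.1 h with h' | h'
    · exact (hWC _ h').2
    · exact absurd hu (hGok _ h').1
    · exact (hWC _ h').1
    · exact absurd hu (hGok _ h').2.1
  · intro hx
    exact (hconn _ h0 _ hx).mono (diagGraph_mono Finset.subset_union_left)

lemma recomp_filter_core (h0 : (⟨0, hn⟩ : Fin n) ∈ S) (hWC : chordsWithin S C)
    (hGok : gapOk S G) (hconn : connOn S C) :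
    coreOf hn (C ∪ G) = C ∧ gapsOf hn (C ∪ G) = G := by
  have hS := recomp_compS hn h0 hWC hGok hconn
  constructor
  · rw [coreOf]
    ext p
    rw [Finset.mem_filter, hS, Finset.mem_union]
    constructor
    · rintro ⟨h | h, h2⟩
      · exact h
      · exact absurd h2 (hGok _ h).1
    · intro h
      exact ⟨Or.inl h, (hWC _ h).1⟩
  · rw [gapsOf]
    ext p
    rw [Finset.mem_filter, hS, Finset.mem_union]
    constructor
    · rintro ⟨h | h, h2⟩
      · exact absurd (hWC _ h).1 h2
      · exact h
    · intro h
      exact ⟨Or.inr h, (hGok _ h).1⟩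

lemma disjoint_core_gaps (hWC : chordsWithin S C) (hGok : gapOk S G) : Disjoint C G := by
  rw [Finset.disjoint_left]
  intro p hp hp'
  exact (hGok _ hp').1 (hWC _ hp).1

end Recomp

end CDaux
namespace CDaux

open Finset

variable {n : ℕ}

lemma natCard_sigma {ι : Type*} [Fintype ι] (F : ι → Type*) [∀ i, Finite (F i)] :
    Nat.card (Σ i, F i) = ∑ i, Nat.card (F i) := by
  letI : ∀ i, Fintype (F i) := fun i => Fintype.ofFinite _
  simp only [Nat.card_eq_fintype_card]
  exact Fintype.card_sigma

lemma natCard_fibers {X ι : Type*} [Finite X] [Fintype ι] (stat : X → ι) :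
    Nat.card X = ∑ i, Nat.card {x : X // stat x = i} := by
  rw [← natCard_sigma]
  exact Nat.card_congr (Equiv.sigmaFiberEquiv stat).symm

lemma core_count (hn : 0 < n) {S : Finset (Fin n)} {k : ℕ}
    (h0 : (⟨0, hn⟩ : Fin n) ∈ S) (hk : S.card = k) (j : ℕ) :
    Nat.card {C : Finset (Fin n × Fin n) //
      chordsWithin S C ∧ IsDiagram C ∧ crossNum C = 0 ∧ C.card = j ∧ connOn S C} = cn k j := by
  classical
  set f : Fin k ↪o Fin n := S.orderEmbOfFin hk with hfdef
  have hfS : ∀ x : Fin k, f x ∈ S := fun x => S.orderEmbOfFin_mem hk x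
  have hmono : StrictMono f := f.strictMono
  have hrange : ∀ x ∈ S, ∃ x₀, f x₀ = x := by
    intro x hx
    have : x ∈ Set.range f := by rw [Finset.range_orderEmbOfFin]; exact hx
    exact this
  have hknz : 0 < k := hk ▸ Finset.card_pos.2 ⟨_, h0⟩
  refine (Nat.card_congr ?_).symm
  refine ⟨fun C₀ => ⟨mapChords f C₀.1, ?_⟩, fun C => ⟨pullChords f C.1, ?_⟩, ?_, ?_⟩
  · obtain ⟨C₀, hd, hx, hc, hconn⟩ := C₀
    refine ⟨?_, (isDiagram_mapChords hmono).2 hd, (crossNum_mapChords_zero hmono).2 hx,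
      (card_mapChords hmono.injective _).trans hc, ?_⟩
    · intro p hp
      obtain ⟨x, y, hxy, rfl⟩ := mem_mapChords_elim hp
      exact ⟨hfS x, hfS y⟩
    · intro x hx y hy
      obtain ⟨x₀, rfl⟩ := hrange x hx
      obtain ⟨y₀, rfl⟩ := hrange y hy
      exact reach_mapChords hmono (hconn.preconnected x₀ y₀)
  · obtain ⟨C, hW, hd, hx, hc, hconn⟩ := C
    dsimp only
    have hmem : ∀ p ∈ C, p.1 ∈ Set.range (f : Fin k → Fin n) ∧ p.2 ∈ Set.range (f : Fin k → Fin n) := by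
      intro p hp
      obtain ⟨x0, hx0⟩ := hrange p.1 (hW p hp).1
      obtain ⟨y0, hy0⟩ := hrange p.2 (hW p hp).2
      exact ⟨⟨x0, hx0⟩, ⟨y0, hy0⟩⟩
    have hCeq : mapChords (f : Fin k → Fin n) (pullChords f C) = C := mapChords_pullChords hmem
    rw [← hCeq] at hd hx hc hconn
    refine ⟨(isDiagram_mapChords hmono).1 hd, (crossNum_mapChords_zero hmono).1 hx,
      (card_mapChords hmono.injective _).symm.trans hc, ?_⟩
    rw [SimpleGraph.connected_iff]
    refine ⟨?_, ⟨⟨0, hknz⟩⟩⟩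
    intro x₀ y₀
    obtain ⟨z, hz, hreach⟩ := reach_mapChords_rev hmono (hconn _ (hfS x₀) _ (hfS y₀)) x₀ rfl
    rw [hmono.injective hz]
    exact hreach
  · intro C₀
    exact Subtype.ext (pullChords_mapChords hmono.injective C₀.1)
  · intro C
    refine Subtype.ext ?_
    obtain ⟨C, hW, _⟩ := C
    dsimp only
    refine mapChords_pullChords ?_
    intro p hp
    obtain ⟨x0, hx0⟩ := hrange p.1 (hW p hp).1
    obtain ⟨y0, hy0⟩ := hrange p.2 (hW p hp).2
    exact ⟨⟨x0, hx0⟩, ⟨y0, hy0⟩⟩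

end CDaux
namespace CDaux

open Finset

variable {n : ℕ}

/-- value of the `i`-th element of `S` -/
def sigV (S : Finset (Fin n)) {k : ℕ} (hk : S.card = k) (i : Fin k) : ℕ :=
  (S.orderEmbOfFin hk i).val

/-- right endpoint of the `i`-th gap -/
def bndF (S : Finset (Fin n)) {k : ℕ} (hk : S.card = k) (i : Fin k) : ℕ :=
  if h : (i : ℕ) + 1 < k then sigV S hk ⟨(i : ℕ) + 1, h⟩ else n

/-- number of vertices in the `i`-th gap -/
def gapA (S : Finset (Fin n)) {k : ℕ} (hk : S.card = k) (i : Fin k) : ℕ :=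
  bndF S hk i - sigV S hk i - 1

section GapStruct

variable {S : Finset (Fin n)} {k : ℕ} (hk : S.card = k)

lemma sigV_strictMono : ∀ {i i' : Fin k}, i < i' → sigV S hk i < sigV S hk i' := by
  intro i i' h
  exact (S.orderEmbOfFin hk).strictMono h

lemma sigV_mem (i : Fin k) : (S.orderEmbOfFin hk i) ∈ S := S.orderEmbOfFin_mem hk i

lemma sigV_lt_n (i : Fin k) : sigV S hk i < n := (S.orderEmbOfFin hk i).isLt

lemma mem_S_iff_sigV {x : Fin n} : x ∈ S ↔ ∃ i : Fin k, x = S.orderEmbOfFin hk i := by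
  constructor
  · intro hx
    have : x ∈ Set.range (S.orderEmbOfFin hk) := by
      rw [Finset.range_orderEmbOfFin]; exact hx
    obtain ⟨i, hi⟩ := this
    exact ⟨i, hi.symm⟩
  · rintro ⟨i, rfl⟩
    exact sigV_mem hk i

lemma sigV_lt_bndF (i : Fin k) : sigV S hk i < bndF S hk i := by
  rw [bndF]
  split
  · exact sigV_strictMono hk (by simp [Fin.lt_def])
  · exact sigV_lt_n hk i

lemma bndF_le_n (i : Fin k) : bndF S hk i ≤ n := by
  rw [bndF]
  split
  · exact le_of_lt (sigV_lt_n hk _)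
  · exact le_rfl

lemma bndF_le_sigV {i i' : Fin k} (h : (i : ℕ) + 1 ≤ (i' : ℕ)) :
    bndF S hk i ≤ sigV S hk i' := by
  have hlt : (i : ℕ) + 1 < k := lt_of_le_of_lt h i'.isLt
  rw [bndF, dif_pos hlt]
  rcases eq_or_lt_of_le h with h' | h'
  · exact le_of_eq (congrArg _ (Fin.ext h'))
  · exact le_of_lt (sigV_strictMono hk (by rw [Fin.lt_def]; exact h'))

end GapStruct

/-- the gap embedding -/
def iotaF (S : Finset (Fin n)) {k : ℕ} (hk : S.card = k) (i : Fin k) :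
    Fin (gapA S hk i) → Fin n :=
  fun t => ⟨sigV S hk i + 1 + t.val, by
    have h1 := sigV_lt_bndF hk i
    have h2 := bndF_le_n hk i
    have h3 := t.isLt
    simp only [gapA] at h3
    omega⟩

section GapStruct2

variable {S : Finset (Fin n)} {k : ℕ} (hk : S.card = k)

lemma iotaF_strictMono (i : Fin k) : StrictMono (iotaF S hk i) := by
  intro t t' h
  rw [Fin.lt_def] at h ⊢
  simp only [iotaF]
  omega

lemma iotaF_val (i : Fin k) (t : Fin (gapA S hk i)) :
    (iotaF S hk i t).val = sigV S hk i + 1 + t.val := rfl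

lemma mem_range_iotaF {i : Fin k} {x : Fin n}
    (h1 : sigV S hk i < x.val) (h2 : x.val < bndF S hk i) :
    ∃ t, iotaF S hk i t = x := by
  have hga : x.val - sigV S hk i - 1 < gapA S hk i := by simp only [gapA]; omega
  refine ⟨⟨x.val - sigV S hk i - 1, hga⟩, ?_⟩
  apply Fin.ext
  rw [iotaF_val]
  simp only
  omega

lemma not_mem_S_of_gap {i : Fin k} {x : Fin n}
    (h1 : sigV S hk i < x.val) (h2 : x.val < bndF S hk i) : x ∉ S := by
  intro hx
  obtain ⟨i', rfl⟩ := (mem_S_iff_sigV hk).1 hx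
  rcases lt_trichotomy i' i with h | h | h
  · have := sigV_strictMono hk h
    exact absurd h1 (by rw [sigV] at this ⊢; omega)
  · subst h
    exact absurd h1 (by rw [sigV]; omega)
  · have : bndF S hk i ≤ sigV S hk i' := bndF_le_sigV hk (by rw [Fin.lt_def] at h; omega)
    exact absurd h2 (by rw [sigV] at this; omega)

end GapStruct2

section Positional

variable {S : Finset (Fin n)} {k : ℕ}

/-- positions determined by a sequence of gap sizes -/
def vposF (av : ℕ → ℕ) (i : ℕ) : ℕ := i + ∑ i' ∈ Finset.range i, av i'

lemma vposF_zero (av : ℕ → ℕ) : vposF av 0 = 0 := by simp [vposF]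

lemma vposF_succ (av : ℕ → ℕ) (i : ℕ) : vposF av (i + 1) = vposF av i + 1 + av i := by
  rw [vposF, vposF, Finset.sum_range_succ]; omega

lemma vposF_mono (av : ℕ → ℕ) {i j : ℕ} (h : i ≤ j) : vposF av i + (j - i) ≤ vposF av j := by
  rw [vposF, vposF]
  have : ∑ i' ∈ Finset.range i, av i' ≤ ∑ i' ∈ Finset.range j, av i' :=
    Finset.sum_le_sum_of_subset (Finset.range_subset_range.2 h)
  omega

/-- gap sizes extracted from `S` -/
def avOf (S : Finset (Fin n)) {k : ℕ} (hk : S.card = k) (i : ℕ) : ℕ :=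
  if h : i < k then gapA S hk ⟨i, h⟩ else 0

lemma vposF_avOf (hn : 0 < n) (hk : S.card = k) (h0 : (⟨0, hn⟩ : Fin n) ∈ S) :
    ∀ j, j ≤ k → vposF (avOf S hk) j = if h : j < k then sigV S hk ⟨j, h⟩ else n := by
  have hk0 : 0 < k := hk ▸ Finset.card_pos.2 ⟨_, h0⟩
  have hsig0 : sigV S hk ⟨0, hk0⟩ = 0 := by
    have hmin : S.orderEmbOfFin hk ⟨0, hk0⟩ = S.min' ⟨_, h0⟩ := Finset.orderEmbOfFin_zero hk hk0
    have : S.min' ⟨_, h0⟩ ≤ ⟨0, hn⟩ := Finset.min'_le _ _ h0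
    rw [sigV, hmin]
    exact Nat.le_antisymm this (Nat.zero_le _)
  intro j
  induction j with
  | zero => intro _; rw [vposF_zero, dif_pos hk0, hsig0]
  | succ i ih =>
      intro hik
      have hi : i < k := by omega
      rw [vposF_succ, ih (le_of_lt hi), dif_pos hi, avOf, dif_pos hi]
      have h1 := sigV_lt_bndF hk ⟨i, hi⟩
      have heq : sigV S hk ⟨i, hi⟩ + 1 + gapA S hk ⟨i, hi⟩ = bndF S hk ⟨i, hi⟩ := by
        simp only [gapA]; omega
      rw [heq]
      rfl

lemma sum_gapA (hn : 0 < n) (hk : S.card = k) (h0 : (⟨0, hn⟩ : Fin n) ∈ S) :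
    k + ∑ i ∈ Finset.range k, avOf S hk i = n := by
  have := vposF_avOf hn hk h0 k le_rfl
  rw [dif_neg (lt_irrefl k), vposF] at this
  omega

end Positional

end CDaux
namespace CDaux

open Finset

variable {n : ℕ}

/-- diagrams type -/
def DiagT (a m : ℕ) : Type :=
  {D : Finset (Fin a × Fin a) // IsDiagram D ∧ crossNum D = 0 ∧ D.card = m}

instance (a m : ℕ) : Finite (DiagT a m) := by
  unfold DiagT; infer_instance

lemma dn_eq_card (a m : ℕ) : dn a m = Nat.card (DiagT a m) := rfl

/-- chords of `G` lying in the `i`-th gap -/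
def GblockF (S : Finset (Fin n)) {k : ℕ} (hk : S.card = k) (G : Finset (Fin n × Fin n))
    (i : Fin k) : Finset (Fin n × Fin n) :=
  G.filter (fun p => sigV S hk i < p.1.val ∧ p.1.val < bndF S hk i)

section Blocks

variable {S : Finset (Fin n)} {k : ℕ} (hk : S.card = k) {G : Finset (Fin n × Fin n)}

lemma mem_GblockF {i : Fin k} {p : Fin n × Fin n} :
    p ∈ GblockF S hk G i ↔ p ∈ G ∧ sigV S hk i < p.1.val ∧ p.1.val < bndF S hk i := by
  simp [GblockF, and_assoc]

lemma GblockF_snd (hd : IsDiagram G) (hok : gapOk S G) {i : Fin k} {p : Fin n × Fin n}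
    (hp : p ∈ GblockF S hk G i) :
    sigV S hk i < p.2.val ∧ p.2.val < bndF S hk i := by
  rw [mem_GblockF] at hp
  obtain ⟨hpG, h1, h2⟩ := hp
  have hord : p.1 < p.2 := hd p hpG
  rw [Fin.lt_def] at hord
  refine ⟨by omega, ?_⟩
  by_contra hge
  push_neg at hge
  by_cases hik : (i : ℕ) + 1 < k
  · have hbnd : bndF S hk i = sigV S hk ⟨(i : ℕ) + 1, hik⟩ := by rw [bndF, dif_pos hik]
    set s : Fin n := S.orderEmbOfFin hk ⟨(i : ℕ) + 1, hik⟩ with hs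
    have hsS : s ∈ S := sigV_mem hk _
    have hsv : s.val = sigV S hk ⟨(i : ℕ) + 1, hik⟩ := rfl
    have hne : s ≠ p.2 := fun h => (hok p hpG).2.1 (h ▸ hsS)
    have : p.1 < s ∧ s < p.2 := by
      rw [Fin.lt_def, Fin.lt_def]
      have : s.val ≠ p.2.val := fun h => hne (Fin.ext h)
      omega
    exact (hok p hpG).2.2 s hsS this
  · have hbnd : bndF S hk i = n := by rw [bndF, dif_neg hik]
    have := p.2.isLt
    omega

lemma GblockF_disjoint {i i' : Fin k} (h : i ≠ i') :
    Disjoint (GblockF S hk G i) (GblockF S hk G i') := by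
  rw [Finset.disjoint_left]
  intro p hp hp'
  rw [mem_GblockF] at hp hp'
  rcases lt_or_gt_of_ne h with hlt | hlt
  · have := bndF_le_sigV hk (show (i : ℕ) + 1 ≤ (i' : ℕ) from by rw [Fin.lt_def] at hlt; omega)
    omega
  · have := bndF_le_sigV hk (show (i' : ℕ) + 1 ≤ (i : ℕ) from by
      have : i' < i := hlt
      rw [Fin.lt_def] at this
      omega)
    omega

lemma GblockF_biUnion (hn : 0 < n) (h0 : (⟨0, hn⟩ : Fin n) ∈ S) (hok : gapOk S G) :
    (Finset.univ : Finset (Fin k)).biUnion (GblockF S hk G) = G := by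
  have hk0 : 0 < k := hk ▸ Finset.card_pos.2 ⟨_, h0⟩
  have hsig0 : sigV S hk ⟨0, hk0⟩ = 0 := by
    have hmin : S.orderEmbOfFin hk ⟨0, hk0⟩ = S.min' ⟨_, h0⟩ := Finset.orderEmbOfFin_zero hk hk0
    have : S.min' ⟨_, h0⟩ ≤ ⟨0, hn⟩ := Finset.min'_le _ _ h0
    rw [sigV, hmin]
    exact Nat.le_antisymm this (Nat.zero_le _)
  ext p
  rw [Finset.mem_biUnion]
  constructor
  · rintro ⟨i, -, hp⟩
    exact (mem_GblockF hk).1 hp |>.1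
  · intro hp
    -- find the gap containing p.1
    have hx : p.1 ∉ S := (hok p hp).1
    have hT : (⟨0, hk0⟩ : Fin k) ∈ Finset.univ.filter (fun i : Fin k => sigV S hk i ≤ p.1.val) := by
      rw [Finset.mem_filter]
      exact ⟨Finset.mem_univ _, by omega⟩
    set T := Finset.univ.filter (fun i : Fin k => sigV S hk i ≤ p.1.val) with hTdef
    have hTne : T.Nonempty := ⟨_, hT⟩
    set i := T.max' hTne with hidef
    have hiT : i ∈ T := T.max'_mem hTne
    rw [hTdef, Finset.mem_filter] at hiT
    have h1 : sigV S hk i < p.1.val := by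
      rcases lt_or_eq_of_le hiT.2 with h | h
      · exact h
      · exact absurd ((mem_S_iff_sigV hk).2 ⟨i, Fin.ext h.symm⟩) hx
    have h2 : p.1.val < bndF S hk i := by
      rw [bndF]
      split
      · rename_i hik
        by_contra hge
        push_neg at hge
        have : (⟨(i : ℕ) + 1, hik⟩ : Fin k) ∈ T := by
          rw [hTdef, Finset.mem_filter]
          exact ⟨Finset.mem_univ _, hge⟩
        have := T.le_max' _ this
        rw [← hidef, Fin.le_def] at this
        simp at this
      · exact p.1.isLt
    exact ⟨i, Finset.mem_univ _, (mem_GblockF hk).2 ⟨hp, h1, h2⟩⟩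

lemma GblockF_range_iota (hd : IsDiagram G) (hok : gapOk S G) {i : Fin k}
    {p : Fin n × Fin n} (hp : p ∈ GblockF S hk G i) :
    p.1 ∈ Set.range (iotaF S hk i) ∧ p.2 ∈ Set.range (iotaF S hk i) := by
  have h2 := GblockF_snd hk hd hok hp
  rw [mem_GblockF] at hp
  obtain ⟨t1, ht1⟩ := mem_range_iotaF hk hp.2.1 hp.2.2
  obtain ⟨t2, ht2⟩ := mem_range_iotaF hk h2.1 h2.2
  exact ⟨⟨t1, ht1⟩, ⟨t2, ht2⟩⟩

end Blocks

section AssemblyDefs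

variable {k : ℕ}

lemma vposF_strictMono (av : ℕ → ℕ) {i j : ℕ} (h : i < j) : vposF av i < vposF av j := by
  have := vposF_mono av (le_of_lt h)
  omega

/-- position vertices of assembly -/
def vfinD {av : ℕ → ℕ} (hvk : vposF av k = n) (i : Fin k) : Fin n :=
  ⟨vposF av i, by
    have := vposF_strictMono av i.isLt
    omega⟩

lemma vfinD_strictMono {av : ℕ → ℕ} (hvk : vposF av k = n) : StrictMono (vfinD hvk) := by
  intro i j h
  rw [Fin.lt_def] at h ⊢
  exact vposF_strictMono av h

/-- gap embedding of assembly -/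
def embD {av : ℕ → ℕ} (hvk : vposF av k = n) (i : ℕ) (hi : i < k) :
    Fin (av i) → Fin n :=
  fun t => ⟨vposF av i + 1 + t.val, by
    have h1 := vposF_succ av i
    have h2 := vposF_mono av (show i + 1 ≤ k from hi)
    have h3 := t.isLt
    omega⟩

lemma embD_strictMono {av : ℕ → ℕ} (hvk : vposF av k = n) (i : ℕ) (hi : i < k) :
    StrictMono (embD hvk i hi) := by
  intro t t' h
  rw [Fin.lt_def] at h ⊢
  simp only [embD]
  omega

lemma embD_val {av : ℕ → ℕ} (hvk : vposF av k = n) (i : ℕ) (hi : i < k) (t : Fin (av i)) :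
    (embD hvk i hi t).val = vposF av i + 1 + t.val := rfl

lemma mem_embD_interval {av : ℕ → ℕ} (hvk : vposF av k = n) {i : ℕ} {hi : i < k}
    {E : Finset (Fin (av i) × Fin (av i))} {p : Fin n × Fin n}
    (hp : p ∈ mapChords (embD hvk i hi) E) :
    vposF av i < p.1.val ∧ p.1.val < vposF av (i + 1) ∧
      vposF av i < p.2.val ∧ p.2.val < vposF av (i + 1) := by
  obtain ⟨x, y, -, rfl⟩ := mem_mapChords_elim hp
  have hx := x.isLt
  have hy := y.isLt
  have hs := vposF_succ av i
  simp only [embD_val]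
  omega

/-- the image of the vertex positions -/
def asmS {av : ℕ → ℕ} (hvk : vposF av k = n) : Finset (Fin n) :=
  Finset.image (vfinD hvk) Finset.univ

lemma mem_asmS {av : ℕ → ℕ} {hvk : vposF av k = n} {x : Fin n} :
    x ∈ asmS hvk ↔ ∃ i : Fin k, x.val = vposF av i := by
  rw [asmS, Finset.mem_image]
  constructor
  · rintro ⟨i, -, rfl⟩
    exact ⟨i, rfl⟩
  · rintro ⟨i, hx⟩
    exact ⟨i, Finset.mem_univ _, Fin.ext hx.symm⟩

lemma card_asmS {av : ℕ → ℕ} (hvk : vposF av k = n) : (asmS hvk).card = k := by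
  rw [asmS, Finset.card_image_of_injective _ (vfinD_strictMono hvk).injective,
    Finset.card_univ, Fintype.card_fin]

/-- no vertex position strictly inside a gap interval -/
lemma asmS_not_in_gap {av : ℕ → ℕ} (hvk : vposF av k = n) {i : ℕ} (hi : i < k)
    {s : Fin n} (hs : s ∈ asmS hvk) :
    ¬ (vposF av i < s.val ∧ s.val < vposF av (i + 1)) := by
  rintro ⟨h1, h2⟩
  obtain ⟨j, hj⟩ := mem_asmS.1 hs
  rcases le_or_gt (j : ℕ) i with h | h
  · have := vposF_mono av h
    omega
  · have := vposF_mono av (show i + 1 ≤ (j : ℕ) from h)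
    omega

end AssemblyDefs

end CDaux
namespace CDaux

open Finset

variable {n : ℕ}

/-- the (S,G) structures counted by the `k`-th power coefficient -/
def NT (hn : 0 < n) (k q : ℕ) : Type :=
  {sg : Finset (Fin n) × Finset (Fin n × Fin n) //
    (⟨0, hn⟩ : Fin n) ∈ sg.1 ∧ sg.1.card = k ∧ IsDiagram sg.2 ∧ crossNum sg.2 = 0 ∧
      gapOk sg.1 sg.2 ∧ sg.2.card = q}

instance (hn : 0 < n) (k q : ℕ) : Finite (NT hn k q) := by
  unfold NT; infer_instance

/-- the data type: a sequence of gap sizes and chord counts plus diagrams -/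
def SRC (k : ℕ) (e' : Fin 2 →₀ ℕ) : Type :=
  Σ (l : ↥(Finset.finsuppAntidiag (Finset.range k) e')),
    ∀ i : ↥(Finset.range k), DiagT ((l.1 i) 0) ((l.1 i) 1)

instance (k : ℕ) (e' : Fin 2 →₀ ℕ) : Finite (SRC k e') := by
  unfold SRC; infer_instance

variable {k : ℕ} {e' : Fin 2 →₀ ℕ}

lemma asm_hvk (hkn : k ≤ n) (he0 : e' 0 = n - k) {l : ℕ →₀ (Fin 2 →₀ ℕ)}
    (hl : l ∈ Finset.finsuppAntidiag (Finset.range k) e') :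
    vposF (fun i => (l i) 0) k = n := by
  rw [Finset.mem_finsuppAntidiag] at hl
  have h1 : (∑ i ∈ Finset.range k, l i) 0 = e' 0 := by rw [hl.1]
  rw [Finset.sum_apply'] at h1
  rw [vposF, h1, he0]
  omega

/-- assembled gap chords -/
def asmG {av : ℕ → ℕ} (hvk : vposF av k = n)
    (Ds : ∀ i : ↥(Finset.range k), Finset (Fin (av i.1) × Fin (av i.1))) :
    Finset (Fin n × Fin n) :=
  Finset.univ.biUnion (fun i : ↥(Finset.range k) =>
    mapChords (embD hvk i.1 (Finset.mem_range.1 i.2)) (Ds i))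

lemma mem_asmG {av : ℕ → ℕ} {hvk : vposF av k = n}
    {Ds : ∀ i : ↥(Finset.range k), Finset (Fin (av i.1) × Fin (av i.1))}
    {p : Fin n × Fin n} :
    p ∈ asmG hvk Ds ↔ ∃ i : ↥(Finset.range k),
      p ∈ mapChords (embD hvk i.1 (Finset.mem_range.1 i.2)) (Ds i) := by
  rw [asmG, Finset.mem_biUnion]
  constructor
  · rintro ⟨i, -, h⟩; exact ⟨i, h⟩
  · rintro ⟨i, h⟩; exact ⟨i, Finset.mem_univ _, h⟩

lemma asm_separation {av : ℕ → ℕ} (hvk : vposF av k = n)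
    {i i' : ℕ} (hik : i < k) (hik' : i' < k) (h : i < i') {p q : Fin n × Fin n}
    {E : Finset (Fin (av i) × Fin (av i))} {E' : Finset (Fin (av i') × Fin (av i'))}
    (hp : p ∈ mapChords (embD hvk i hik) E) (hq : q ∈ mapChords (embD hvk i' hik') E') :
    p.2.val < q.1.val := by
  have h1 := mem_embD_interval hvk hp
  have h2 := mem_embD_interval hvk hq
  have := vposF_mono av (show i + 1 ≤ i' from h)
  omega

section AsmProps

variable (hn : 0 < n)

lemma asm_k_pos (hkn : k ≤ n) (he0 : e' 0 = n - k) {l : ℕ →₀ (Fin 2 →₀ ℕ)}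
    (hl : l ∈ Finset.finsuppAntidiag (Finset.range k) e') (hn : 0 < n) : 0 < k := by
  rcases Nat.eq_zero_or_pos k with h | h
  · exfalso
    have := asm_hvk hkn he0 hl
    rw [h, vposF_zero] at this
    omega
  · exact h

lemma asm_zero_mem (hkn : k ≤ n) (he0 : e' 0 = n - k) {l : ℕ →₀ (Fin 2 →₀ ℕ)}
    (hl : l ∈ Finset.finsuppAntidiag (Finset.range k) e') :
    (⟨0, hn⟩ : Fin n) ∈ asmS (asm_hvk hkn he0 hl) := by
  rw [mem_asmS]
  exact ⟨⟨0, asm_k_pos hkn he0 hl hn⟩, (vposF_zero _).symm⟩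

variable (hkn : k ≤ n) (he0 : e' 0 = n - k)

lemma asm_isDiagram {l : ℕ →₀ (Fin 2 →₀ ℕ)}
    (hl : l ∈ Finset.finsuppAntidiag (Finset.range k) e')
    (Ds : ∀ i : ↥(Finset.range k), DiagT ((l i) 0) ((l i) 1)) :
    IsDiagram (asmG (asm_hvk hkn he0 hl) (fun i => (Ds i).1)) := by
  intro p hp
  obtain ⟨i, hpi⟩ := mem_asmG.1 hp
  exact (isDiagram_mapChords (embD_strictMono _ _ _)).2 (Ds i).2.1 p hpi

lemma asm_crossNum {l : ℕ →₀ (Fin 2 →₀ ℕ)}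
    (hl : l ∈ Finset.finsuppAntidiag (Finset.range k) e')
    (Ds : ∀ i : ↥(Finset.range k), DiagT ((l i) 0) ((l i) 1)) :
    crossNum (asmG (asm_hvk hkn he0 hl) (fun i => (Ds i).1)) = 0 := by
  rw [crossNum_eq_zero_iff]
  intro p hp q hq
  obtain ⟨i, hpi⟩ := mem_asmG.1 hp
  obtain ⟨i', hqi⟩ := mem_asmG.1 hq
  rcases lt_trichotomy (i.1 : ℕ) i'.1 with h | h | h
  · have := asm_separation _ (Finset.mem_range.1 i.2) (Finset.mem_range.1 i'.2) h hpi hqi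
    rintro ⟨ha, hb, hc⟩
    rw [Fin.lt_def] at ha hb hc
    omega
  · have hii : i = i' := Subtype.ext h
    subst hii
    obtain ⟨x, y, hxy, hpeq⟩ := mem_mapChords_elim hpi
    obtain ⟨z, w, hzw, hqeq⟩ := mem_mapChords_elim hqi
    subst hpeq hqeq
    intro hint
    have hmp := (interleaves_map (embD_strictMono (asm_hvk hkn he0 hl) i.1
      (Finset.mem_range.1 i.2)) (p := (x, y)) (q := (z, w))).1
    exact crossNum_eq_zero_iff.1 (Ds i).2.2.1 _ hxy _ hzw (hmp hint)
  · have := asm_separation _ (Finset.mem_range.1 i'.2) (Finset.mem_range.1 i.2) h hqi hpi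
    rintro ⟨ha, hb, hc⟩
    rw [Fin.lt_def] at ha hb hc
    omega

lemma asm_gapOk {l : ℕ →₀ (Fin 2 →₀ ℕ)}
    (hl : l ∈ Finset.finsuppAntidiag (Finset.range k) e')
    (Ds : ∀ i : ↥(Finset.range k), DiagT ((l i) 0) ((l i) 1)) :
    gapOk (asmS (asm_hvk hkn he0 hl)) (asmG (asm_hvk hkn he0 hl) (fun i => (Ds i).1)) := by
  intro p hp
  obtain ⟨i, hpi⟩ := mem_asmG.1 hp
  have hint := mem_embD_interval _ hpi
  have hik : i.1 < k := Finset.mem_range.1 i.2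
  refine ⟨fun hs => asmS_not_in_gap _ hik hs ⟨hint.1, hint.2.1⟩,
    fun hs => asmS_not_in_gap _ hik hs ⟨hint.2.2.1, hint.2.2.2⟩, ?_⟩
  rintro s hs ⟨h1, h2⟩
  rw [Fin.lt_def] at h1 h2
  exact asmS_not_in_gap _ hik hs ⟨by omega, by omega⟩

lemma asm_card {l : ℕ →₀ (Fin 2 →₀ ℕ)}
    (hl : l ∈ Finset.finsuppAntidiag (Finset.range k) e')
    (Ds : ∀ i : ↥(Finset.range k), DiagT ((l i) 0) ((l i) 1)) :
    (asmG (asm_hvk hkn he0 hl) (fun i => (Ds i).1)).card = e' 1 := by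
  rw [asmG, Finset.card_biUnion]
  · have hsum : ∀ i : ↥(Finset.range k),
        (mapChords (embD (asm_hvk hkn he0 hl) i.1 (Finset.mem_range.1 i.2)) (Ds i).1).card
          = (l i.1) 1 := by
      intro i
      rw [card_mapChords (embD_strictMono _ _ _).injective, (Ds i).2.2.2]
    rw [Finset.sum_congr rfl (fun i _ => hsum i)]
    rw [Finset.mem_finsuppAntidiag] at hl
    have h1 : (∑ i ∈ Finset.range k, l i) 1 = e' 1 := by rw [hl.1]
    rw [Finset.sum_apply'] at h1
    rw [← h1]
    exact Finset.sum_coe_sort (Finset.range k) (fun i => (l i) 1)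
  · intro i _ i' _ hne
    refine Finset.disjoint_left.2 ?_
    intro p hp hp'
    rcases lt_trichotomy (i.1 : ℕ) i'.1 with h | h | h
    · have h1 := mem_embD_interval (asm_hvk hkn he0 hl) hp
      have h2 := mem_embD_interval (asm_hvk hkn he0 hl) hp'
      have := vposF_mono (fun j => (l j) 0) (show i.1 + 1 ≤ i'.1 from h)
      omega
    · exact hne (Subtype.ext h)
    · have h1 := mem_embD_interval (asm_hvk hkn he0 hl) hp
      have h2 := mem_embD_interval (asm_hvk hkn he0 hl) hp'
      have := vposF_mono (fun j => (l j) 0) (show i'.1 + 1 ≤ i.1 from h)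
      omega

end AsmProps

/-- the assembly map -/
noncomputable def asmF (hn : 0 < n) (hkn : k ≤ n) (he0 : e' 0 = n - k) (x : SRC k e') :
    NT hn k (e' 1) :=
  ⟨(asmS (asm_hvk hkn he0 x.1.2), asmG (asm_hvk hkn he0 x.1.2) (fun i => (x.2 i).1)),
    asm_zero_mem hn hkn he0 x.1.2, card_asmS _,
    asm_isDiagram hkn he0 x.1.2 x.2, asm_crossNum hkn he0 x.1.2 x.2,
    asm_gapOk hkn he0 x.1.2 x.2, asm_card hkn he0 x.1.2 x.2⟩

end CDaux
namespace CDaux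

open Finset

variable {n k : ℕ} {e' : Fin 2 →₀ ℕ}

lemma mapChords_comp {a b c : ℕ} (f : Fin b → Fin c) (g : Fin a → Fin b)
    (E : Finset (Fin a × Fin a)) :
    mapChords f (mapChords g E) = mapChords (fun x => f (g x)) E := by
  simp [mapChords, Finset.image_image]
  rfl

lemma finCast_strictMono {a b : ℕ} (h : a = b) : StrictMono (Fin.cast h) := by
  intro x y hxy
  rw [Fin.lt_def] at hxy ⊢
  simpa using hxy

lemma asm_block_filter {av : ℕ → ℕ} (hvk : vposF av k = n)
    (Ds : ∀ i : ↥(Finset.range k), Finset (Fin (av i.1) × Fin (av i.1)))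
    (i : ℕ) (hi : i < k) :
    (asmG hvk Ds).filter
        (fun p => vposF av i < p.1.val ∧ p.1.val < vposF av (i + 1)) =
      mapChords (embD hvk i hi) (Ds ⟨i, Finset.mem_range.2 hi⟩) := by
  ext p
  rw [Finset.mem_filter, mem_asmG]
  constructor
  · rintro ⟨⟨i', hpi'⟩, h1, h2⟩
    have hint := mem_embD_interval hvk hpi'
    have hii : (i'.1 : ℕ) = i := by
      by_contra hne
      rcases lt_or_gt_of_ne hne with h | h
      · have := vposF_mono av (show i'.1 + 1 ≤ i from h)
        omega
      · have := vposF_mono av (show i + 1 ≤ i'.1 from h)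
        omega
    have : i' = ⟨i, Finset.mem_range.2 hi⟩ := Subtype.ext hii
    rwa [this] at hpi'
  · intro hp
    have hint := mem_embD_interval hvk hp
    exact ⟨⟨⟨i, Finset.mem_range.2 hi⟩, hp⟩, hint.1, hint.2.1⟩

lemma asm_injective (hn : 0 < n) (hkn : k ≤ n) (he0 : e' 0 = n - k) :
    Function.Injective (asmF hn hkn he0 (k := k) (e' := e')) := by
  rintro ⟨⟨l, hl⟩, D⟩ ⟨⟨l', hl'⟩, D'⟩ h
  replace h : asmS (asm_hvk hkn he0 hl) = asmS (asm_hvk hkn he0 hl') ∧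
      asmG (asm_hvk hkn he0 hl) (fun i => (D i).1) = asmG (asm_hvk hkn he0 hl') (fun i => (D' i).1) :=
    Prod.mk.inj (congrArg Subtype.val h)
  obtain ⟨hS, hG⟩ := h
  set hvk := asm_hvk hkn he0 hl with hvkdef
  set hvk' := asm_hvk hkn he0 hl' with hvkdef'
  -- step 1: the vertex positions agree
  have hvf : ∀ j : ℕ, j ≤ k → vposF (fun i => (l i) 0) j = vposF (fun i => (l' i) 0) j := by
    intro j hj
    rcases eq_or_lt_of_le hj with rfl | hj
    · rw [hvk, hvk']
    · have e1 : (fun i : Fin k => vfinD hvk i) = ⇑((asmS hvk).orderEmbOfFin (card_asmS hvk)) :=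
        Finset.orderEmbOfFin_unique (card_asmS hvk)
          (fun i => Finset.mem_image.2 ⟨i, Finset.mem_univ _, rfl⟩) (vfinD_strictMono hvk)
      have e2 : (fun i : Fin k => vfinD hvk' i) =
          ⇑((asmS hvk').orderEmbOfFin (card_asmS hvk')) :=
        Finset.orderEmbOfFin_unique (card_asmS hvk')
          (fun i => Finset.mem_image.2 ⟨i, Finset.mem_univ _, rfl⟩) (vfinD_strictMono hvk')
      have e2' : (fun i : Fin k => vfinD hvk i) =
          ⇑((asmS hvk').orderEmbOfFin (card_asmS hvk')) :=
        Finset.orderEmbOfFin_unique (card_asmS hvk')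
          (fun i => hS ▸ Finset.mem_image.2 ⟨i, Finset.mem_univ _, rfl⟩) (vfinD_strictMono hvk)
      have hvv : vfinD hvk ⟨j, hj⟩ = vfinD hvk' ⟨j, hj⟩ := by
        rw [congrFun e2' ⟨j, hj⟩, congrFun e2 ⟨j, hj⟩]
      exact congrArg Fin.val hvv
  -- step 2: the gap sizes agree
  have hav : ∀ i : ℕ, (l i) 0 = (l' i) 0 := by
    intro i
    rcases lt_or_ge i k with hik | hik
    · have h1 := hvf i (le_of_lt hik)
      have h2 := hvf (i + 1) hik
      rw [vposF_succ, vposF_succ] at h2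
      omega
    · have z1 : l i = 0 := Finsupp.notMem_support_iff.1
        (fun hc => by have := (Finset.mem_finsuppAntidiag.1 hl).2 hc; rw [Finset.mem_range] at this; omega)
      have z2 : l' i = 0 := Finsupp.notMem_support_iff.1
        (fun hc => by have := (Finset.mem_finsuppAntidiag.1 hl').2 hc; rw [Finset.mem_range] at this; omega)
      rw [z1, z2]
  -- step 3: blocks agree
  have hblock : ∀ (i : ℕ) (hi : i < k),
      mapChords (embD hvk i hi) ((D ⟨i, Finset.mem_range.2 hi⟩).1) =
        mapChords (embD hvk' i hi) ((D' ⟨i, Finset.mem_range.2 hi⟩).1) := by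
    intro i hi
    rw [← asm_block_filter hvk (fun i => (D i).1) i hi, hvf i (le_of_lt hi),
      hvf (i + 1) hi, hG, asm_block_filter hvk' (fun i => (D' i).1) i hi]
  -- step 4: l = l'
  have hll : l = l' := by
    ext i c
    have hc : c = 0 ∨ c = 1 := by omega
    rcases hc with rfl | rfl
    · exact hav i
    · rcases lt_or_ge i k with hik | hik
      · have hcard := congrArg Finset.card (hblock i hik)
        rw [card_mapChords (embD_strictMono _ _ _).injective,
          card_mapChords (embD_strictMono _ _ _).injective,
          (D ⟨i, Finset.mem_range.2 hik⟩).2.2.2, (D' ⟨i, Finset.mem_range.2 hik⟩).2.2.2] at hcard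
        exact hcard
      · have z1 : l i = 0 := Finsupp.notMem_support_iff.1
          (fun hc => by have := (Finset.mem_finsuppAntidiag.1 hl).2 hc; rw [Finset.mem_range] at this; omega)
        have z2 : l' i = 0 := Finsupp.notMem_support_iff.1
          (fun hc => by have := (Finset.mem_finsuppAntidiag.1 hl').2 hc; rw [Finset.mem_range] at this; omega)
        rw [z1, z2]
  subst hll
  -- step 5: D = D'
  have hDD : D = D' := by
    funext i
    apply Subtype.ext
    have hi := Finset.mem_range.1 i.2
    exact mapChords_injective (embD_strictMono _ _ _).injective (hblock i.1 hi)
  rw [hDD]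

end CDaux
namespace CDaux

open Finset

variable {n k : ℕ} {e' : Fin 2 →₀ ℕ}

lemma asm_surjective (hn : 0 < n) (hkn : k ≤ n) (he0 : e' 0 = n - k) :
    Function.Surjective (asmF hn hkn he0 (k := k) (e' := e')) := by
  rintro ⟨⟨S, G⟩, h0, hkS, hd, hx, hok, hq⟩
  classical
  dsimp only at h0 hkS hd hx hok hq
  have hk0 : 0 < k := hkS ▸ Finset.card_pos.2 ⟨_, h0⟩
  set av : ℕ → ℕ := avOf S hkS with havdef
  set bv : ℕ → ℕ := fun i => if h : i < k then (GblockF S hkS G ⟨i, h⟩).card else 0 with hbvdef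
  set lf : ℕ → (Fin 2 →₀ ℕ) :=
    fun i => Finsupp.single 0 (av i) + Finsupp.single 1 (bv i) with hlfdef
  have hlf0 : ∀ i, (lf i) 0 = av i := by
    intro i
    simp [hlfdef, Finsupp.single_apply]
  have hlf1 : ∀ i, (lf i) 1 = bv i := by
    intro i
    simp [hlfdef, Finsupp.single_apply]
  have hout : ∀ i, i ∉ Finset.range k → lf i = 0 := by
    intro i hi
    rw [Finset.mem_range] at hi
    have hav0 : av i = 0 := by rw [havdef, avOf, dif_neg hi]
    have hbv0 : bv i = 0 := by rw [hbvdef]; exact dif_neg hi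
    simp [hlfdef, hav0, hbv0]
  set l : ℕ →₀ (Fin 2 →₀ ℕ) :=
    Finsupp.onFinset (Finset.range k) lf
      (fun i hne => by by_contra hc; exact hne (hout i hc)) with hldef
  have hlapp : ∀ i, l i = lf i := fun i => rfl
  -- the blocks of G
  have hbiG : (Finset.univ : Finset (Fin k)).biUnion (GblockF S hkS G) = G :=
    GblockF_biUnion hkS hn h0 hok
  have hblockcard : ∀ i : Fin k, (GblockF S hkS G i).card = bv i.val := by
    intro i
    simp only [hbvdef]
    rw [dif_pos i.isLt]
  have hl : l ∈ Finset.finsuppAntidiag (Finset.range k) e' := by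
    rw [Finset.mem_finsuppAntidiag]
    refine ⟨?_, Finsupp.support_onFinset_subset⟩
    ext c
    rw [Finset.sum_apply']
    have hc : c = 0 ∨ c = 1 := by omega
    rcases hc with rfl | rfl
    · have : ∀ i ∈ Finset.range k, (l i) 0 = av i := fun i _ => by rw [hlapp, hlf0]
      rw [Finset.sum_congr rfl this, havdef, he0]
      have hsum : k + (Finset.range k).sum (avOf S hkS) = n := sum_gapA hn hkS h0
      omega
    · have : ∀ i ∈ Finset.range k, (l i) 1 = bv i := fun i _ => by rw [hlapp, hlf1]
      rw [Finset.sum_congr rfl this]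
      have hcard : G.card = ∑ i : Fin k, (GblockF S hkS G i).card := by
        conv_lhs => rw [← hbiG]
        exact Finset.card_biUnion (fun i _ i' _ hne => GblockF_disjoint hkS hne)
      calc ∑ i ∈ Finset.range k, bv i
          = ∑ i : Fin k, bv i.val := (Fin.sum_univ_eq_sum_range bv k).symm
        _ = ∑ i : Fin k, (GblockF S hkS G i).card :=
            Finset.sum_congr rfl (fun i _ => (hblockcard i).symm)
        _ = G.card := hcard.symm
        _ = e' 1 := hq
  -- the per-gap diagrams
  have hveq : ∀ j, j ≤ k → vposF (fun i => (l i) 0) j =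
      if h : j < k then sigV S hkS ⟨j, h⟩ else n := by
    intro j hj
    have hfeq : (fun i => (l i) 0) = av := funext (fun i => by rw [hlapp, hlf0])
    rw [show vposF (fun i => (l i) 0) j = vposF av j from congrFun (congrArg vposF hfeq) j]
    exact vposF_avOf hn hkS h0 j hj
  have hcast : ∀ i : ↥(Finset.range k),
      gapA S hkS ⟨i.1, Finset.mem_range.1 i.2⟩ = (l i.1) 0 := by
    intro i
    rw [hlapp, hlf0, havdef, avOf, dif_pos (Finset.mem_range.1 i.2)]
  have hbdiag : ∀ i : Fin k, IsDiagram (GblockF S hkS G i) :=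
    fun i p hp => hd p ((mem_GblockF hkS).1 hp).1
  have hbcross : ∀ i : Fin k, crossNum (GblockF S hkS G i) = 0 :=
    fun i => crossNum_zero_of_subset (Finset.filter_subset _ _) hx
  have hpm : ∀ i : Fin k,
      mapChords (iotaF S hkS i) (pullChords (iotaF S hkS i) (GblockF S hkS G i)) =
        GblockF S hkS G i :=
    fun i => mapChords_pullChords (fun p hp => GblockF_range_iota hkS hd hok hp)
  have hprops : ∀ i : ↥(Finset.range k),
      IsDiagram (mapChords (Fin.cast (hcast i))
          (pullChords (iotaF S hkS ⟨i.1, Finset.mem_range.1 i.2⟩)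
            (GblockF S hkS G ⟨i.1, Finset.mem_range.1 i.2⟩))) ∧
      crossNum (mapChords (Fin.cast (hcast i))
          (pullChords (iotaF S hkS ⟨i.1, Finset.mem_range.1 i.2⟩)
            (GblockF S hkS G ⟨i.1, Finset.mem_range.1 i.2⟩))) = 0 ∧
      (mapChords (Fin.cast (hcast i))
          (pullChords (iotaF S hkS ⟨i.1, Finset.mem_range.1 i.2⟩)
            (GblockF S hkS G ⟨i.1, Finset.mem_range.1 i.2⟩))).card = (l i.1) 1 := by
    intro i
    set ifin : Fin k := ⟨i.1, Finset.mem_range.1 i.2⟩ with hifin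
    have hdiagpull : IsDiagram (pullChords (iotaF S hkS ifin) (GblockF S hkS G ifin)) :=
      (isDiagram_mapChords (iotaF_strictMono hkS ifin)).1 ((hpm ifin).symm ▸ hbdiag ifin)
    have hcrosspull : crossNum (pullChords (iotaF S hkS ifin) (GblockF S hkS G ifin)) = 0 :=
      (crossNum_mapChords_zero (iotaF_strictMono hkS ifin)).1 ((hpm ifin).symm ▸ hbcross ifin)
    refine ⟨(isDiagram_mapChords (finCast_strictMono _)).2 hdiagpull,
      (crossNum_mapChords_zero (finCast_strictMono _)).2 hcrosspull, ?_⟩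
    rw [card_mapChords (finCast_strictMono _).injective]
    have := card_mapChords (iotaF_strictMono hkS ifin).injective
      (pullChords (iotaF S hkS ifin) (GblockF S hkS G ifin))
    rw [hpm ifin] at this
    rw [← this, hblockcard ifin, hlapp, hlf1]
  refine ⟨⟨⟨l, hl⟩, fun i => ⟨mapChords (Fin.cast (hcast i))
    (pullChords (iotaF S hkS ⟨i.1, Finset.mem_range.1 i.2⟩)
      (GblockF S hkS G ⟨i.1, Finset.mem_range.1 i.2⟩)), hprops i⟩⟩, ?_⟩
  apply Subtype.ext
  dsimp only [asmF]
  rw [Prod.mk.injEq]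
  constructor
  · -- assembled S equals S
    ext x
    rw [mem_asmS, mem_S_iff_sigV hkS]
    constructor
    · rintro ⟨i, hxi⟩
      have := hveq i.1 (le_of_lt i.isLt)
      rw [dif_pos i.isLt] at this
      exact ⟨⟨i.1, i.isLt⟩, Fin.ext (by rw [hxi, this]; rfl)⟩
    · rintro ⟨i, rfl⟩
      refine ⟨⟨i.1, i.isLt⟩, ?_⟩
      have := hveq i.1 (le_of_lt i.isLt)
      rw [dif_pos i.isLt] at this
      rw [this]
      rfl
  · -- assembled G equals G
    ext p
    rw [mem_asmG]
    have hblk : ∀ i : ↥(Finset.range k),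
        mapChords (embD (asm_hvk hkn he0 hl) i.1 (Finset.mem_range.1 i.2))
            (mapChords (Fin.cast (hcast i))
              (pullChords (iotaF S hkS ⟨i.1, Finset.mem_range.1 i.2⟩)
                (GblockF S hkS G ⟨i.1, Finset.mem_range.1 i.2⟩))) =
          GblockF S hkS G ⟨i.1, Finset.mem_range.1 i.2⟩ := by
      intro i
      rw [mapChords_comp]
      have hfeq : (fun x => embD (asm_hvk hkn he0 hl) i.1 (Finset.mem_range.1 i.2)
          (Fin.cast (hcast i) x)) = iotaF S hkS ⟨i.1, Finset.mem_range.1 i.2⟩ := by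
        funext t
        apply Fin.ext
        rw [embD_val, iotaF_val]
        have := hveq i.1 (le_of_lt (Finset.mem_range.1 i.2))
        rw [dif_pos (Finset.mem_range.1 i.2)] at this
        rw [this]
        simp [Fin.coe_cast]
      rw [hfeq, hpm]
    constructor
    · rintro ⟨i, hpi⟩
      rw [hblk i] at hpi
      exact ((mem_GblockF hkS).1 hpi).1
    · intro hp
      have : p ∈ (Finset.univ : Finset (Fin k)).biUnion (GblockF S hkS G) := hbiG.symm ▸ hp
      obtain ⟨i, -, hpi⟩ := Finset.mem_biUnion.1 this
      refine ⟨⟨i.1, Finset.mem_range.2 i.isLt⟩, ?_⟩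
      rw [hblk ⟨i.1, Finset.mem_range.2 i.isLt⟩]
      exact hpi
end CDaux
namespace CDaux

open Finset

variable {n k : ℕ} {e' : Fin 2 →₀ ℕ}

lemma gap_count (hn : 0 < n) (hkn : k ≤ n) (he0 : e' 0 = n - k) :
    Nat.card (NT hn k (e' 1)) =
      ∑ l ∈ Finset.finsuppAntidiag (Finset.range k) e',
        ∏ i ∈ Finset.range k, dn ((l i) 0) ((l i) 1) := by
  rw [← Nat.card_congr (Equiv.ofBijective _
    ⟨asm_injective hn hkn he0, asm_surjective hn hkn he0⟩)]
  have h0 : Nat.card (SRC k e') =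
      Nat.card (Σ (l : ↥(Finset.finsuppAntidiag (Finset.range k) e')),
        ∀ i : ↥(Finset.range k), DiagT ((l.1 i) 0) ((l.1 i) 1)) := rfl
  rw [h0, natCard_sigma]
  have h1 : ∀ l : ↥(Finset.finsuppAntidiag (Finset.range k) e'),
      Nat.card (∀ i : ↥(Finset.range k), DiagT ((l.1 i) 0) ((l.1 i) 1)) =
        ∏ i ∈ Finset.range k, dn ((l.1 i) 0) ((l.1 i) 1) := by
    intro l
    calc Nat.card (∀ i : ↥(Finset.range k), DiagT ((l.1 i) 0) ((l.1 i) 1))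
        = ∏ i : ↥(Finset.range k), Nat.card (DiagT ((l.1 i) 0) ((l.1 i) 1)) := Nat.card_pi
      _ = ∏ i : ↥(Finset.range k), dn ((l.1 i.1) 0) ((l.1 i.1) 1) :=
          Finset.prod_congr rfl (fun i _ => (dn_eq_card _ _).symm)
      _ = ∏ i ∈ Finset.range k, dn ((l.1 i) 0) ((l.1 i) 1) :=
          Finset.prod_coe_sort _ (fun i => dn ((l.1 i) 0) ((l.1 i) 1))
  rw [Finset.sum_congr rfl (fun l _ => h1 l)]
  exact Finset.sum_coe_sort (Finset.finsuppAntidiag (Finset.range k) e')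
    (fun l => ∏ i ∈ Finset.range k, dn ((l i) 0) ((l i) 1))

/-- full decomposition data: component set, core, gap chords -/
def MT (hn : 0 < n) (k j q : ℕ) : Type :=
  {scg : Finset (Fin n) × Finset (Fin n × Fin n) × Finset (Fin n × Fin n) //
    (⟨0, hn⟩ : Fin n) ∈ scg.1 ∧ scg.1.card = k ∧
    chordsWithin scg.1 scg.2.1 ∧ IsDiagram scg.2.1 ∧ crossNum scg.2.1 = 0 ∧
    scg.2.1.card = j ∧ connOn scg.1 scg.2.1 ∧
    IsDiagram scg.2.2 ∧ crossNum scg.2.2 = 0 ∧ gapOk scg.1 scg.2.2 ∧ scg.2.2.card = q}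

instance (hn : 0 < n) (k j q : ℕ) : Finite (MT hn k j q) := by
  unfold MT; infer_instance

lemma M_count (hn : 0 < n) (k j q : ℕ) :
    Nat.card (MT hn k j q) = cn k j * Nat.card (NT hn k q) := by
  have he : MT hn k j q ≃ Σ (sg : NT hn k q),
      {C : Finset (Fin n × Fin n) // chordsWithin sg.1.1 C ∧ IsDiagram C ∧
        crossNum C = 0 ∧ C.card = j ∧ connOn sg.1.1 C} := by
    refine ⟨fun scg => ⟨⟨(scg.1.1, scg.1.2.2), scg.2.1, scg.2.2.1,
        scg.2.2.2.2.2.2.2.2.1, scg.2.2.2.2.2.2.2.2.2.1,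
        scg.2.2.2.2.2.2.2.2.2.2.1, scg.2.2.2.2.2.2.2.2.2.2.2⟩,
      ⟨scg.1.2.1, scg.2.2.2.1, scg.2.2.2.2.1, scg.2.2.2.2.2.1,
        scg.2.2.2.2.2.2.1, scg.2.2.2.2.2.2.2.1⟩⟩,
      fun x => ⟨(x.1.1.1, x.2.1, x.1.1.2), x.1.2.1, x.1.2.2.1,
        x.2.2.1, x.2.2.2.1, x.2.2.2.2.1, x.2.2.2.2.2.1, x.2.2.2.2.2.2,
        x.1.2.2.2.1, x.1.2.2.2.2.1, x.1.2.2.2.2.2.1, x.1.2.2.2.2.2.2⟩, ?_, ?_⟩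
    · rintro ⟨⟨S, C, G⟩, h⟩
      rfl
    · rintro ⟨⟨⟨S, G⟩, h1⟩, ⟨C, h2⟩⟩
      rfl
  rw [Nat.card_congr he]
  letI : Fintype (NT hn k q) := Fintype.ofFinite _
  rw [natCard_sigma]
  have hfib : ∀ sg : NT hn k q, Nat.card
      {C : Finset (Fin n × Fin n) // chordsWithin sg.1.1 C ∧ IsDiagram C ∧
        crossNum C = 0 ∧ C.card = j ∧ connOn sg.1.1 C} = cn k j :=
    fun sg => core_count hn sg.2.1 sg.2.2.1 j
  rw [Finset.sum_congr rfl (fun sg _ => hfib sg)]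
  rw [Finset.sum_const, Finset.card_univ, ← Nat.card_eq_fintype_card]
  exact Nat.mul_comm _ _

end CDaux
namespace CDaux

open Finset

variable {n : ℕ}

lemma diag_decomp (hn : 0 < n) (m : ℕ) :
    dn n m = ∑ kj : Fin (n + 1) × Fin (m + 1),
      Nat.card (MT hn kj.1.val kj.2.val (m - kj.2.val)) := by
  classical
  have hstat : ∀ D : DiagT n m, (compS hn D.1).card < n + 1 ∧ (coreOf hn D.1).card < m + 1 := by
    intro D
    constructor
    · have : (compS hn D.1).card ≤ n := by
        have := Finset.card_le_univ (compS hn D.1)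
        rwa [Fintype.card_fin] at this
      omega
    · have h1 : (coreOf hn D.1).card ≤ D.1.card := Finset.card_filter_le _ _
      have h2 := D.2.2.2
      omega
  set stat : DiagT n m → Fin (n + 1) × Fin (m + 1) :=
    fun D => (⟨(compS hn D.1).card, (hstat D).1⟩, ⟨(coreOf hn D.1).card, (hstat D).2⟩)
    with hstatdef
  rw [dn_eq_card, natCard_fibers stat]
  refine Finset.sum_congr rfl (fun kj _ => ?_)
  -- the fiber over kj is equivalent to MT
  have hprop : ∀ x : {D : DiagT n m // stat D = kj},
      (⟨0, hn⟩ : Fin n) ∈ compS hn x.1.1 ∧ (compS hn x.1.1).card = kj.1.val ∧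
      chordsWithin (compS hn x.1.1) (coreOf hn x.1.1) ∧ IsDiagram (coreOf hn x.1.1) ∧
      crossNum (coreOf hn x.1.1) = 0 ∧ (coreOf hn x.1.1).card = kj.2.val ∧
      connOn (compS hn x.1.1) (coreOf hn x.1.1) ∧
      IsDiagram (gapsOf hn x.1.1) ∧ crossNum (gapsOf hn x.1.1) = 0 ∧
      gapOk (compS hn x.1.1) (gapsOf hn x.1.1) ∧
      (gapsOf hn x.1.1).card = m - kj.2.val := by
    rintro ⟨⟨D, hd, hx, hm⟩, hst⟩
    dsimp only
    have hc1 : (compS hn D).card = kj.1.val := by rw [← hst]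
    have hc2 : (coreOf hn D).card = kj.2.val := by rw [← hst]
    have hsplit : (coreOf hn D).card + (gapsOf hn D).card = m := by
      have hdisj : Disjoint (coreOf hn D) (gapsOf hn D) := by
        rw [Finset.disjoint_left]
        intro p hp hp'
        exact (Finset.mem_filter.1 hp').2 (Finset.mem_filter.1 hp).2
      have hcg := congrArg Finset.card (core_union_gaps (hn := hn) (D := D))
      rw [Finset.card_union_of_disjoint hdisj, hm] at hcg
      exact hcg
    refine ⟨zero_mem_compS, hc1, chordsWithin_coreOf hd, ?_, ?_, hc2, connOn_coreOf hd,
      ?_, ?_, gapOk_gapsOf hd hx, by omega⟩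
    · exact fun p hp => hd p (Finset.mem_filter.1 hp).1
    · exact crossNum_zero_of_subset (Finset.filter_subset _ _) hx
    · exact fun p hp => hd p (Finset.mem_filter.1 hp).1
    · exact crossNum_zero_of_subset (Finset.filter_subset _ _) hx
  refine Nat.card_eq_of_bijective
    (fun x => ⟨(compS hn x.1.1, coreOf hn x.1.1, gapsOf hn x.1.1), hprop x⟩) ⟨?_, ?_⟩
  · rintro x x' h
    replace h := congrArg Subtype.val h
    simp only [Prod.mk.injEq] at h
    apply Subtype.ext
    apply Subtype.ext
    rw [← core_union_gaps (hn := hn) (D := x.1.1), ← core_union_gaps (hn := hn) (D := x'.1.1)]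
    rw [h.2.1, h.2.2]
  · rintro ⟨⟨S, C, G⟩, h1, h2, h3, h4, h5, h6, h7, h8, h9, h10, h11⟩
    have hdisj : Disjoint C G := disjoint_core_gaps h3 h10
    have hdu : IsDiagram (C ∪ G) := by
      intro p hp
      rcases Finset.mem_union.1 hp with h | h
      · exact h4 p h
      · exact h8 p h
    have hcu : crossNum (C ∪ G) = 0 := recomp_crossNum h3 h10 h5 h9
    have hcards : (C ∪ G).card = m := by
      rw [Finset.card_union_of_disjoint hdisj, h6, h11]
      have := kj.2.isLt
      omega
    have hcompS : compS hn (C ∪ G) = S := recomp_compS hn h1 h3 h10 h7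
    have hfc := recomp_filter_core hn h1 h3 h10 h7
    have hstateq : stat ⟨C ∪ G, hdu, hcu, hcards⟩ = kj := by
      rw [hstatdef]
      have e1 : (compS hn (C ∪ G)).card = kj.1.val := by rw [hcompS, h2]
      have e2 : (coreOf hn (C ∪ G)).card = kj.2.val := by rw [hfc.1, h6]
      exact Prod.ext (Fin.ext e1) (Fin.ext e2)
    refine ⟨⟨⟨C ∪ G, hdu, hcu, hcards⟩, hstateq⟩, ?_⟩
    apply Subtype.ext
    dsimp only
    rw [Prod.mk.injEq, Prod.mk.injEq]
    exact ⟨hcompS, hfc.1, hfc.2⟩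

end CDaux
namespace CDaux

open Finset MvPowerSeries

variable {n : ℕ}

lemma main_count (hn : 0 < n) (m : ℕ) (E : ℕ → ℕ → (Fin 2 →₀ ℕ))
    (hE0 : ∀ k j, k ≤ n → j ≤ m → (E k j) 0 = n - k)
    (hE1 : ∀ k j, k ≤ n → j ≤ m → (E k j) 1 = m - j) :
    dn n m = ∑ k ∈ Finset.range (n + 1), ∑ j ∈ Finset.range (m + 1),
      cn k j * ∑ l ∈ Finset.finsuppAntidiag (Finset.range k) (E k j),
        ∏ i ∈ Finset.range k, dn ((l i) 0) ((l i) 1) := by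
  have hterm : ∀ (k j : ℕ), k ≤ n → j ≤ m → Nat.card (MT hn k j (m - j)) =
      cn k j * ∑ l ∈ Finset.finsuppAntidiag (Finset.range k) (E k j),
        ∏ i ∈ Finset.range k, dn ((l i) 0) ((l i) 1) := by
    intro k j hk hj
    rw [M_count]
    congr 1
    have h1 : m - j = (E k j) 1 := (hE1 k j hk hj).symm
    rw [h1]
    exact gap_count hn hk (hE0 k j hk hj)
  rw [diag_decomp hn m, Fintype.sum_prod_type]
  have hinner : ∀ a : Fin (n + 1),
      (∑ b : Fin (m + 1), Nat.card (MT hn a.val b.val (m - b.val))) =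
        ∑ j ∈ Finset.range (m + 1), cn a.val j *
          ∑ l ∈ Finset.finsuppAntidiag (Finset.range a.val) (E a.val j),
            ∏ i ∈ Finset.range a.val, dn ((l i) 0) ((l i) 1) := by
    intro a
    have h1 : ∀ b : Fin (m + 1), Nat.card (MT hn a.val b.val (m - b.val)) =
        (fun j => cn a.val j * ∑ l ∈ Finset.finsuppAntidiag (Finset.range a.val) (E a.val j),
          ∏ i ∈ Finset.range a.val, dn ((l i) 0) ((l i) 1)) b.val :=
      fun b => hterm a.val b.val (by omega) (by omega)
    rw [Finset.sum_congr rfl (fun b _ => h1 b)]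
    exact Fin.sum_univ_eq_sum_range (fun j => cn a.val j *
      ∑ l ∈ Finset.finsuppAntidiag (Finset.range a.val) (E a.val j),
        ∏ i ∈ Finset.range a.val, dn ((l i) 0) ((l i) 1)) (m + 1)
  rw [Finset.sum_congr rfl (fun a _ => hinner a)]
  exact Fin.sum_univ_eq_sum_range (fun k => ∑ j ∈ Finset.range (m + 1), cn k j *
    ∑ l ∈ Finset.finsuppAntidiag (Finset.range k) (E k j),
      ∏ i ∈ Finset.range k, dn ((l i) 0) ((l i) 1)) (n + 1)

lemma dn_zero (m : ℕ) : dn 0 m = if m = 0 then 1 else 0 := by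
  split
  · rename_i hm
    subst hm
    haveI : Unique {D : Finset (Fin 0 × Fin 0) // IsDiagram D ∧ crossNum D = 0 ∧ D.card = 0} :=
      { default := ⟨∅, fun p hp => absurd hp (Finset.notMem_empty p), by simp [crossNum], rfl⟩,
        uniq := fun D => Subtype.ext (Finset.eq_empty_of_isEmpty D.1) }
    exact Nat.card_unique
  · rename_i hm
    haveI : IsEmpty {D : Finset (Fin 0 × Fin 0) // IsDiagram D ∧ crossNum D = 0 ∧ D.card = m} := by
      refine ⟨fun D => ?_⟩
      have := D.2.2.2
      rw [Finset.eq_empty_of_isEmpty D.1, Finset.card_empty] at this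
      exact hm this.symm
    exact Nat.card_of_isEmpty

lemma cn_zero (j : ℕ) : cn 0 j = 0 := by
  haveI : IsEmpty {D : Finset (Fin 0 × Fin 0) //
      IsDiagram D ∧ crossNum D = 0 ∧ D.card = j ∧ (diagGraph D).Connected} := by
    refine ⟨fun D => ?_⟩
    obtain ⟨x⟩ := D.2.2.2.2.nonempty
    exact x.elim0
  exact Nat.card_of_isEmpty

lemma coeff_diagGF0 (e : Fin 2 →₀ ℕ) :
    MvPowerSeries.coeff e diagGF0 = (dn (e 0) (e 1) : ℚ) := rfl

lemma coeff_connDiagGF0 (e : Fin 2 →₀ ℕ) :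
    MvPowerSeries.coeff e connDiagGF0 = (cn (e 0) (e 1) : ℚ) := rfl

lemma single_apply_0 (k j : ℕ) :
    ((Finsupp.single (0 : Fin 2) k + Finsupp.single (1 : Fin 2) j) : Fin 2 →₀ ℕ) 0 = k := by
  simp [Finsupp.single_apply]

lemma single_apply_1 (k j : ℕ) :
    ((Finsupp.single (0 : Fin 2) k + Finsupp.single (1 : Fin 2) j) : Fin 2 →₀ ℕ) 1 = j := by
  simp [Finsupp.single_apply]

lemma coeff_subst_term (e : Fin 2 →₀ ℕ) {k j : ℕ} (hk : k ≤ e 0) (hj : j ≤ e 1) :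
    MvPowerSeries.coeff e ((MvPowerSeries.X 0 * diagGF0) ^ k * MvPowerSeries.X 1 ^ j) =
      ((∑ l ∈ Finset.finsuppAntidiag (Finset.range k)
          (e - (Finsupp.single (0 : Fin 2) k + Finsupp.single (1 : Fin 2) j)),
        ∏ i ∈ Finset.range k, dn ((l i) 0) ((l i) 1) : ℕ) : ℚ) := by
  have hrw : (MvPowerSeries.X 0 * diagGF0) ^ k * MvPowerSeries.X 1 ^ j =
      MvPowerSeries.monomial (Finsupp.single (0 : Fin 2) k + Finsupp.single (1 : Fin 2) j) 1 *
        diagGF0 ^ k := by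
    calc (MvPowerSeries.X 0 * diagGF0) ^ k * MvPowerSeries.X 1 ^ j
        = (MvPowerSeries.X 0 ^ k * MvPowerSeries.X 1 ^ j) * diagGF0 ^ k := by ring
      _ = _ := by
          rw [MvPowerSeries.X_pow_eq, MvPowerSeries.X_pow_eq,
            MvPowerSeries.monomial_mul_monomial, one_mul]
  rw [hrw, MvPowerSeries.coeff_monomial_mul]
  have hle : (Finsupp.single (0 : Fin 2) k + Finsupp.single (1 : Fin 2) j) ≤ e := by
    rw [Finsupp.le_def]
    intro a
    have ha : a = 0 ∨ a = 1 := by omega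
    rcases ha with rfl | rfl
    · rw [single_apply_0]; exact hk
    · rw [single_apply_1]; exact hj
  rw [if_pos hle, one_mul, MvPowerSeries.coeff_pow]
  push_cast
  refine Finset.sum_congr rfl (fun l _ => ?_)
  refine Finset.prod_congr rfl (fun i _ => ?_)
  rfl

end CDaux

/-- If `C(x,y)` is the generating function of connected crossing-free chord
diagrams and `D₀(x,y)` that of all crossing-free chord diagrams, then
`D₀(x,y) = 1 + C(x·D₀(x,y), y)`. The substitution is stated coefficientwise:
`C(x·D₀, y) = Σ_{n,m} c_{n,m} (x·D₀)^n y^m`, and for a given monomial `e` only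
the summands with `n ≤ e(0)` and `m ≤ e(1)` can contribute, so the sum may be
truncated there. -/
theorem diagGF0_eq_one_add_connDiagGF0_subst :
    ∀ e : Fin 2 →₀ ℕ,
      MvPowerSeries.coeff e diagGF0 =
        MvPowerSeries.coeff e (1 : MvPowerSeries (Fin 2) ℚ) +
          ∑ nm ∈ Finset.range (e 0 + 1) ×ˢ Finset.range (e 1 + 1),
            MvPowerSeries.coeff
                (Finsupp.single (0 : Fin 2) nm.1 + Finsupp.single (1 : Fin 2) nm.2)
                connDiagGF0 *
              MvPowerSeries.coeff e
                ((MvPowerSeries.X 0 * diagGF0) ^ nm.1 * MvPowerSeries.X 1 ^ nm.2) := by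
  intro e
  rcases Nat.eq_zero_or_pos (e 0) with hn | hn
  · -- the empty circle
    have hsum : (∑ nm ∈ Finset.range (e 0 + 1) ×ˢ Finset.range (e 1 + 1),
        MvPowerSeries.coeff
            (Finsupp.single (0 : Fin 2) nm.1 + Finsupp.single (1 : Fin 2) nm.2)
            connDiagGF0 *
          MvPowerSeries.coeff e
            ((MvPowerSeries.X 0 * diagGF0) ^ nm.1 * MvPowerSeries.X 1 ^ nm.2)) = 0 := by
      refine Finset.sum_eq_zero ?_
      rintro ⟨k, j⟩ hkj
      rw [Finset.mem_product, Finset.mem_range, Finset.mem_range, hn] at hkj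
      have hk0 : k = 0 := by omega
      subst hk0
      rw [CDaux.coeff_connDiagGF0, CDaux.single_apply_0, CDaux.single_apply_1,
        CDaux.cn_zero]
      push_cast
      rw [zero_mul]
    rw [hsum, add_zero, CDaux.coeff_diagGF0, hn, CDaux.dn_zero, MvPowerSeries.coeff_one]
    by_cases hm : e 1 = 0
    · have he : e = 0 := by
        ext a
        have ha : a = 0 ∨ a = 1 := by omega
        rcases ha with rfl | rfl
        · rw [hn]; rfl
        · rw [hm]; rfl
      rw [if_pos hm, if_pos he]
      norm_num
    · have he : e ≠ 0 := fun h => hm (by rw [h]; rfl)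
      rw [if_neg hm, if_neg he]
      norm_num
  · -- a nonempty circle
    have hone : MvPowerSeries.coeff e (1 : MvPowerSeries (Fin 2) ℚ) = 0 := by
      rw [MvPowerSeries.coeff_one, if_neg]
      intro h
      rw [h] at hn
      simp at hn
    rw [hone, zero_add, CDaux.coeff_diagGF0, Finset.sum_product]
    rw [CDaux.main_count hn (e 1)
      (fun k j => e - (Finsupp.single (0 : Fin 2) k + Finsupp.single (1 : Fin 2) j))
      (fun k j hk hj => by rw [Finsupp.tsub_apply, CDaux.single_apply_0])
      (fun k j hk hj => by rw [Finsupp.tsub_apply, CDaux.single_apply_1])]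
    push_cast
    refine Finset.sum_congr rfl (fun k hk => ?_)
    refine Finset.sum_congr rfl (fun j hj => ?_)
    rw [Finset.mem_range] at hk hj
    rw [CDaux.coeff_connDiagGF0, CDaux.single_apply_0, CDaux.single_apply_1,
      CDaux.coeff_subst_term e (by omega) (by omega)]
    push_cast
    ring
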